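/- arXiv:2605.06298 — 2 statements merged into one kernel-verified Lean document; each statement's English description precedes it below -/
import Mathlib

section
/- Let Δ > 0 be a sampling interval and let f, g : ℝ → ℂ be continuous integrable functions whose Fourier transforms both vanish outside the closed interval [−ξ, ξ] for some ξ with ξ < 1/(2Δ) (i.e., both functions contain no spatial frequencies reaching the Nyquist frequency 1/(2Δ)). If f(nΔ) = g(nΔ) for every integer n, then f = g; that is, a band-limited continuous integrable function is unambiguously determined by its uniform samples at spacing Δ. -/
open MeasureTheory Real Complex Set FourierTransform

/-- **Nyquist–Shannon sampling theorem (uniqueness form).**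
If `f` and `g` are continuous integrable functions on `ℝ` whose Fourier transforms vanish
outside `[-ξ, ξ]` for some `ξ` strictly below the Nyquist frequency `1 / (2Δ)` of a sampling
interval `Δ > 0`, and `f` and `g` agree at every sample point `n • Δ` (`n : ℤ`), then
`f = g`: a band-limited function is unambiguously determined by its uniform samples. -/
theorem nyquist_shannon_sampling_uniqueness
    (Δ ξ : ℝ) (hΔ : 0 < Δ) (hξ : ξ < 1 / (2 * Δ))
    (f g : ℝ → ℂ)
    (hf_cont : Continuous f) (hg_cont : Continuous g)
    (hf_int : MeasureTheory.Integrable f) (hg_int : MeasureTheory.Integrable g)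
    (hf_band : ∀ w : ℝ, w ∉ Set.Icc (-ξ) ξ → FourierTransform.fourier f w = 0)
    (hg_band : ∀ w : ℝ, w ∉ Set.Icc (-ξ) ξ → FourierTransform.fourier g w = 0)
    (h_samples : ∀ n : ℤ, f (n * Δ) = g (n * Δ)) :
    f = g := by
  set T : ℝ := 1 / Δ with hTdef
  have hT : 0 < T := by positivity
  haveI : Fact (0 < T) := ⟨hT⟩
  have hξT : ξ < T / 2 := by
    have : T / 2 = 1 / (2 * Δ) := by rw [hTdef]; ring
    linarith
  -- the difference function
  set h : ℝ → ℂ := f - g with hh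
  have hh_cont : Continuous h := hf_cont.sub hg_cont
  have hh_int : Integrable h := hf_int.sub hg_int
  -- its Fourier transform
  set F : ℝ → ℂ := 𝓕 h with hFdef
  have hF_eq : ∀ w, F w = 𝓕 f w - 𝓕 g w := by
    intro w
    rw [hFdef]
    simp only [Real.fourier_eq]
    rw [← integral_sub ((Real.fourierIntegral_convergent_iff w).2 hf_int)
      ((Real.fourierIntegral_convergent_iff w).2 hg_int)]
    congr 1
    ext v
    simp [hh, smul_sub]
  have hband : ∀ w : ℝ, w ∉ Set.Icc (-ξ) ξ → F w = 0 := by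
    intro w hw
    rw [hF_eq, hf_band w hw, hg_band w hw, sub_zero]
  have hF0out : ∀ x : ℝ, x ∉ Set.Ioo (-(T / 2)) (T / 2) → F x = 0 := by
    intro x hx
    apply hband
    intro hmem
    exact hx ⟨by linarith [hmem.1], by linarith [hmem.2]⟩
  have hF_cont : Continuous F :=
    VectorFourier.fourierIntegral_continuous (L := innerₗ ℝ) Real.continuous_fourierChar
      (by exact continuous_inner) hh_int
  have hFcs : HasCompactSupport F :=
    HasCompactSupport.intro isCompact_Icc hband
  have hF_int : Integrable F := hF_cont.integrable_of_hasCompactSupport hFcs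
  -- samples of h vanish
  have hsamp : ∀ n : ℤ, h (n * Δ) = 0 := by
    intro n; simp [hh, h_samples n]
  -- Fourier transform of F vanishes at the lattice points
  have hFF : ∀ n : ℤ, 𝓕 F (n * Δ) = 0 := by
    intro n
    have hinv : 𝓕⁻ F (-(n * Δ)) = h (-(n * Δ)) :=
      hh_int.fourierInv_fourier_eq hF_int hh_cont.continuousAt
    have h2 : h (-(n * Δ)) = 0 := by
      have := hsamp (-n)
      simpa using this
    have h3 := Real.fourierInv_eq_fourier_neg F (-(n * Δ))
    rw [neg_neg] at h3
    rw [← h3, hinv, h2]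
  -- the periodized function on the circle
  set a : ℝ := -(T / 2) with hadef
  have haT : a + T = T / 2 := by rw [hadef]; ring
  set G : AddCircle T → ℂ := AddCircle.liftIco T a F with hGdef
  have hG_cont : Continuous G := by
    apply AddCircle.liftIco_continuous
    · have e1 : F a = 0 := hF0out a (fun hc => (lt_irrefl a hc.1).elim)
      have e2 : F (a + T) = 0 := hF0out (a + T) (fun hc => by
        rw [haT] at hc; exact (lt_irrefl _ hc.2).elim)
      rw [e1, e2]
    · exact hF_cont.continuousOn
  -- all Fourier coefficients of G vanish
  have hcoeff : ∀ n : ℤ, fourierCoeff G n = 0 := by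
    intro n
    rw [hGdef, fourierCoeff_liftIco_eq, fourierCoeffOn_eq_integral]
    rw [show a + T - a = T by ring]
    have key : (∫ x in a..a + T, fourier (-n) (x : AddCircle T) • F x)
        = 𝓕 F (n * Δ) := by
      rw [intervalIntegral.integral_of_le (by linarith : a ≤ a + T),
        MeasureTheory.integral_Ioc_eq_integral_Ioo,
        setIntegral_eq_integral_of_forall_compl_eq_zero (fun x hx => ?_),
        Real.fourier_real_eq_integral_exp_smul]
      · refine integral_congr_ae (Filter.Eventually.of_forall fun x => ?_)
        simp only [Circle.smul_def, fourier_coe_apply, smul_eq_mul]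
        congr 1
        have hΔ' : (Δ : ℂ) ≠ 0 := by exact_mod_cast hΔ.ne'
        rw [hTdef]
        push_cast
        field_simp
      · rw [smul_eq_zero]
        right
        apply hF0out
        rwa [haT] at hx
    show (1 / T : ℝ) • (∫ x in a..a + T, fourier (-n) (x : AddCircle T) • F x) = 0
    rw [key, hFF n, smul_zero]
  -- conclude G = 0 using the Hilbert basis of Fourier monomials
  have hG_mem : MemLp G 2 AddCircle.haarAddCircle := hG_cont.memLp_of_hasCompactSupport (IsClosed.isCompact (isClosed_tsupport G))
  set Gq : Lp ℂ 2 (AddCircle.haarAddCircle (T := T)) := hG_mem.toLp G with hGq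
  have hGq0 : Gq = 0 := by
    have hrepr : fourierBasis.repr Gq = 0 := by
      ext n
      rw [fourierBasis_repr]
      have : fourierCoeff (Gq : AddCircle T → ℂ) n = fourierCoeff G n := by
        simp only [fourierCoeff]
        exact integral_congr_ae ((hG_mem.coeFn_toLp).mono fun x hx => by simp only [hGq]; rw [hx])
      rw [this, hcoeff n]
      rfl
    exact fourierBasis.repr.map_eq_zero_iff.1 hrepr
  have hGae : G =ᵐ[AddCircle.haarAddCircle] (fun _ => (0 : ℂ)) := by
    have h1 : (Gq : AddCircle T → ℂ) =ᵐ[AddCircle.haarAddCircle] G := hG_mem.coeFn_toLp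
    have h2 : (Gq : AddCircle T → ℂ) =ᵐ[AddCircle.haarAddCircle] (fun _ => (0 : ℂ)) := by
      rw [hGq0]; exact Lp.coeFn_zero _ _ _
    exact h1.symm.trans h2
  have hGzero : G = fun _ => (0 : ℂ) :=
    (hG_cont.ae_eq_iff_eq AddCircle.haarAddCircle continuous_const).1 hGae
  -- hence F = 0 everywhere
  have hFzero : ∀ x : ℝ, F x = 0 := by
    intro x
    by_cases hx : x ∈ Set.Ioo (-(T / 2)) (T / 2)
    · have hx' : x ∈ Set.Ico a (a + T) := by
        rw [haT, hadef]; exact ⟨hx.1.le, hx.2⟩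
      have := AddCircle.liftIco_coe_apply (f := F) hx'
      rw [← hGdef] at this
      rw [← this, hGzero]
    · exact hF0out x hx
  -- Fourier inversion: h = 0
  funext x
  have hinv : 𝓕⁻ F x = h x :=
    hh_int.fourierInv_fourier_eq hF_int hh_cont.continuousAt
  have hFfun : F = fun _ => (0 : ℂ) := funext hFzero
  have : h x = 0 := by
    rw [← hinv, hFfun]
    simp [Real.fourierInv_eq]
  have hx0 : f x - g x = 0 := by simpa [hh] using this
  exact sub_eq_zero.mp hx0
end

section
/- Let μ and ν be Borel probability measures on ℝ with finite first moments (∫|x| dμ < ∞ and ∫|x| dν < ∞), and let F_μ and F_ν denote their cumulative distribution functions. Then the Wasserstein-1 distance between μ and ν, defined as the infimum over all couplings γ (probability measures on ℝ × ℝ whose first marginal is μ and whose second marginal is ν) of ∫ |u − v| dγ(u, v), equals the integral ∫_ℝ |F_μ(x) − F_ν(x)| dx. -/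
open MeasureTheory Set Filter Topology

namespace Vallender

/-- The CDF as a real-valued function. -/
noncomputable def Fc (μ : Measure ℝ) (x : ℝ) : ℝ := (μ (Set.Iic x)).toReal

lemma Fc_mono (μ : Measure ℝ) [IsFiniteMeasure μ] : Monotone (Fc μ) := fun a b hab =>
  ENNReal.toReal_mono (measure_ne_top _ _) (measure_mono (Iic_subset_Iic.2 hab))

lemma Fc_nonneg (μ : Measure ℝ) (x : ℝ) : 0 ≤ Fc μ x := ENNReal.toReal_nonneg

lemma Fc_le_one (μ : Measure ℝ) [IsProbabilityMeasure μ] (x : ℝ) : Fc μ x ≤ 1 := by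
  have h : μ (Set.Iic x) ≤ 1 := prob_le_one
  simpa [Fc] using ENNReal.toReal_mono (by simp) h

lemma measurable_Fc (μ : Measure ℝ) [IsFiniteMeasure μ] : Measurable (Fc μ) :=
  (Fc_mono μ).measurable

lemma ofReal_Fc (μ : Measure ℝ) [IsFiniteMeasure μ] (x : ℝ) :
    ENNReal.ofReal (Fc μ x) = μ (Set.Iic x) :=
  ENNReal.ofReal_toReal (measure_ne_top _ _)

/-- Right-continuity of the CDF, in the form we need. -/
lemma le_Fc_of_forall (μ : Measure ℝ) [IsFiniteMeasure μ] {t x : ℝ}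
    (h : ∀ ε : ℝ, 0 < ε → t ≤ Fc μ (x + ε)) : t ≤ Fc μ x := by
  have hanti : Antitone (fun n : ℕ => Set.Iic (x + 1 / (n + 1))) := by
    intro n m hnm
    apply Iic_subset_Iic.2
    have : (1 : ℝ) / (m + 1) ≤ 1 / (n + 1) := by
      apply one_div_le_one_div_of_le (by positivity)
      exact_mod_cast Nat.add_le_add_right hnm 1
    linarith
  have hinter : (⋂ n : ℕ, Set.Iic (x + 1 / (n + 1))) = Set.Iic x := by
    ext y
    simp only [mem_iInter, mem_Iic]
    constructor
    · intro hy
      by_contra hxy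
      push_neg at hxy
      obtain ⟨n, hn⟩ := exists_nat_one_div_lt (show (0:ℝ) < y - x by linarith)
      have := hy n
      linarith
    · intro hy n
      have : (0:ℝ) < 1 / (n + 1) := by positivity
      linarith
  have htend : Tendsto (fun n : ℕ => μ (Set.Iic (x + 1 / (n + 1)))) atTop
      (𝓝 (μ (Set.Iic x))) := by
    have := tendsto_measure_iInter_atTop (μ := μ)
      (fun n => (measurableSet_Iic).nullMeasurableSet) hanti ⟨0, measure_ne_top _ _⟩
    rw [hinter] at this
    exact this
  have htendR : Tendsto (fun n : ℕ => Fc μ (x + 1 / (n + 1))) atTop (𝓝 (Fc μ x)) :=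
    (ENNReal.tendsto_toReal (measure_ne_top _ _)).comp htend
  exact ge_of_tendsto' htendR fun n => h (1 / ((n:ℝ) + 1)) (by positivity)

/-- The raw quantile function. -/
noncomputable def Qr (μ : Measure ℝ) (t : ℝ) : ℝ := sInf {x | t ≤ Fc μ x}

/-- The quantile function, zeroed-out outside `(0,1)`. -/
noncomputable def Q (μ : Measure ℝ) : ℝ → ℝ := (Set.Ioo (0:ℝ) 1).indicator (Qr μ)

lemma Q_eq (μ : Measure ℝ) {t : ℝ} (ht : t ∈ Set.Ioo (0:ℝ) 1) : Q μ t = Qr μ t :=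
  Set.indicator_of_mem ht _

lemma S_nonempty (μ : Measure ℝ) [IsProbabilityMeasure μ] {t : ℝ} (ht : t < 1) :
    {x | t ≤ Fc μ x}.Nonempty := by
  have h1 : Tendsto (fun x : ℝ => Fc μ x) atTop (𝓝 1) := by
    have := tendsto_measure_Iic_atTop (μ := μ)
    rw [measure_univ] at this
    have := (ENNReal.tendsto_toReal (by simp)).comp this
    simpa [Fc, Function.comp_def] using this
  obtain ⟨x, hx⟩ := (h1.eventually (eventually_ge_nhds ht)).exists
  exact ⟨x, hx⟩

lemma S_bddBelow (μ : Measure ℝ) [IsProbabilityMeasure μ] {t : ℝ} (ht : 0 < t) :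
    BddBelow {x | t ≤ Fc μ x} := by
  have h0 : Tendsto (fun n : ℕ => Fc μ (-(n:ℝ))) atTop (𝓝 0) := by
    have hanti : Antitone (fun n : ℕ => Set.Iic (-(n:ℝ))) := by
      intro n m hnm
      apply Iic_subset_Iic.2
      simp only [neg_le_neg_iff]
      exact_mod_cast hnm
    have hinter : (⋂ n : ℕ, Set.Iic (-(n:ℝ))) = ∅ := by
      ext y
      simp only [mem_iInter, mem_Iic, mem_empty_iff_false, iff_false, not_forall, not_le]
      obtain ⟨n, hn⟩ := exists_nat_gt (-y)
      exact ⟨n, by linarith⟩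
    have := tendsto_measure_iInter_atTop (μ := μ)
      (fun n => (measurableSet_Iic).nullMeasurableSet) hanti ⟨0, measure_ne_top _ _⟩
    rw [hinter, measure_empty] at this
    have := (ENNReal.tendsto_toReal (by simp)).comp this
    simpa [Fc, Function.comp_def] using this
  obtain ⟨n, hn⟩ := (h0.eventually (eventually_lt_nhds ht)).exists
  refine ⟨-(n:ℝ), fun y hy => ?_⟩
  by_contra hxy
  push_neg at hxy
  have : Fc μ y ≤ Fc μ (-(n:ℝ)) := Fc_mono μ hxy.le
  have : t ≤ Fc μ (-(n:ℝ)) := le_trans hy this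
  linarith

/-- Galois connection between the quantile function and the CDF. -/
lemma Q_le_iff (μ : Measure ℝ) [IsProbabilityMeasure μ] {t x : ℝ}
    (ht : t ∈ Set.Ioo (0:ℝ) 1) : Q μ t ≤ x ↔ t ≤ Fc μ x := by
  rw [Q_eq μ ht]
  constructor
  · intro h
    apply le_Fc_of_forall μ
    intro ε hε
    have hlt : sInf {x | t ≤ Fc μ x} < x + ε := lt_of_le_of_lt h (by linarith)
    obtain ⟨y, hy, hyx⟩ := exists_lt_of_csInf_lt (S_nonempty μ ht.2) hlt
    exact le_trans hy (Fc_mono μ hyx.le)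
  · intro h
    exact csInf_le (S_bddBelow μ ht.1) h

lemma measurable_Q (μ : Measure ℝ) [IsProbabilityMeasure μ] : Measurable (Q μ) := by
  apply measurable_of_Iic
  intro x
  by_cases hx : (0:ℝ) ≤ x
  · have : Q μ ⁻¹' Set.Iic x =
        (Set.Ioo (0:ℝ) 1 ∩ Set.Iic (Fc μ x)) ∪ (Set.Ioo (0:ℝ) 1)ᶜ := by
      ext t
      by_cases ht : t ∈ Set.Ioo (0:ℝ) 1
      · simp only [mem_preimage, mem_Iic, mem_union, mem_inter_iff, mem_compl_iff, ht,
          true_and, not_true, or_false]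
        exact Q_le_iff μ ht
      · simp only [mem_preimage, mem_Iic, mem_union, mem_inter_iff, mem_compl_iff, ht,
          false_and, not_false_iff, or_true, iff_true]
        simp [Q, Set.indicator_of_notMem ht, hx]
    rw [this]
    exact (measurableSet_Ioo.inter measurableSet_Iic).union measurableSet_Ioo.compl
  · have : Q μ ⁻¹' Set.Iic x = Set.Ioo (0:ℝ) 1 ∩ Set.Iic (Fc μ x) := by
      ext t
      by_cases ht : t ∈ Set.Ioo (0:ℝ) 1
      · simp only [mem_preimage, mem_Iic, mem_inter_iff, ht, true_and]
        exact Q_le_iff μ ht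
      · simp only [mem_preimage, mem_Iic, mem_inter_iff, ht, false_and, iff_false]
        simp only [Q, Set.indicator_of_notMem ht]
        intro h
        exact hx h
    rw [this]
    exact measurableSet_Ioo.inter measurableSet_Iic

/-- Lebesgue measure of `Iic c ∩ Ioo 0 1` for `0 ≤ c ≤ 1`. -/
lemma vol_Iic_inter (c : ℝ) (h0 : 0 ≤ c) (h1 : c ≤ 1) :
    volume (Set.Iic c ∩ Set.Ioo (0:ℝ) 1) = ENNReal.ofReal c := by
  apply le_antisymm
  · calc volume (Set.Iic c ∩ Set.Ioo (0:ℝ) 1) ≤ volume (Set.Ioc (0:ℝ) c) := by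
          apply measure_mono
          rintro t ⟨htc, ht0, ht1⟩
          exact ⟨ht0, htc⟩
      _ = ENNReal.ofReal c := by rw [Real.volume_Ioc, sub_zero]
  · calc ENNReal.ofReal c = volume (Set.Ioo (0:ℝ) c) := by rw [Real.volume_Ioo, sub_zero]
      _ ≤ volume (Set.Iic c ∩ Set.Ioo (0:ℝ) 1) := by
          apply measure_mono
          rintro t ⟨ht0, htc⟩
          exact ⟨htc.le, ht0, lt_of_lt_of_le htc h1⟩

instance : IsProbabilityMeasure (volume.restrict (Set.Ioo (0:ℝ) 1)) :=
  ⟨by rw [Measure.restrict_apply MeasurableSet.univ, Set.univ_inter, Real.volume_Ioo]; norm_num⟩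

/-- The quantile function pushes Lebesgue measure on `(0,1)` forward to `μ`. -/
lemma map_Q (μ : Measure ℝ) [IsProbabilityMeasure μ] :
    Measure.map (Q μ) (volume.restrict (Set.Ioo (0:ℝ) 1)) = μ := by
  have : IsProbabilityMeasure (Measure.map (Q μ) (volume.restrict (Set.Ioo (0:ℝ) 1))) :=
    Measure.isProbabilityMeasure_map (measurable_Q μ).aemeasurable
  apply Measure.ext_of_Iic
  intro x
  rw [Measure.map_apply (measurable_Q μ) measurableSet_Iic,
    Measure.restrict_apply ((measurable_Q μ) measurableSet_Iic)]
  have : Q μ ⁻¹' Set.Iic x ∩ Set.Ioo 0 1 = Set.Iic (Fc μ x) ∩ Set.Ioo 0 1 := by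
    ext t
    simp only [mem_inter_iff, mem_preimage, mem_Iic, and_congr_left_iff]
    intro ht
    exact Q_le_iff μ ht
  rw [this, vol_Iic_inter _ (Fc_nonneg μ x) (Fc_le_one μ x), ofReal_Fc]

/-- The pointwise layer-cake identity. -/
lemma abs_eq_vol (u v : ℝ) :
    ENNReal.ofReal |u - v| = volume {x : ℝ | (x < u ∧ v ≤ x) ∨ (x < v ∧ u ≤ x)} := by
  have key : ∀ u v : ℝ, u ≤ v →
      {x : ℝ | (x < u ∧ v ≤ x) ∨ (x < v ∧ u ≤ x)} = Set.Ico u v := by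
    intro u v huv
    ext x
    simp only [mem_setOf_eq, mem_Ico]
    constructor
    · rintro (⟨h1, h2⟩ | ⟨h1, h2⟩)
      · linarith
      · exact ⟨h2, h1⟩
    · rintro ⟨h1, h2⟩
      exact Or.inr ⟨h2, h1⟩
  rcases le_total u v with h | h
  · rw [key u v h, Real.volume_Ico, abs_sub_comm, abs_of_nonneg (by linarith)]
  · have : {x : ℝ | (x < u ∧ v ≤ x) ∨ (x < v ∧ u ≤ x)} =
        {x : ℝ | (x < v ∧ u ≤ x) ∨ (x < u ∧ v ≤ x)} := by ext x; exact or_comm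
    rw [this, key v u h, Real.volume_Ico, abs_of_nonneg (by linarith)]

/-- The core Fubini/Tonelli computation. -/
lemma cost_eq {α : Type*} [MeasurableSpace α] (ρ : Measure α) [SFinite ρ]
    {f g : α → ℝ} (hf : Measurable f) (hg : Measurable g) :
    ∫⁻ a, ENNReal.ofReal |f a - g a| ∂ρ =
    ∫⁻ x, ρ {a | (x < f a ∧ g a ≤ x) ∨ (x < g a ∧ f a ≤ x)} := by
  set S : Set (α × ℝ) :=
    {p | (p.2 < f p.1 ∧ g p.1 ≤ p.2) ∨ (p.2 < g p.1 ∧ f p.1 ≤ p.2)} with hS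
  have hSm : MeasurableSet S := by
    apply MeasurableSet.union
    · exact (measurableSet_lt measurable_snd (hf.comp measurable_fst)).inter
        (measurableSet_le (hg.comp measurable_fst) measurable_snd)
    · exact (measurableSet_lt measurable_snd (hg.comp measurable_fst)).inter
        (measurableSet_le (hf.comp measurable_fst) measurable_snd)
  have h1 : ∫⁻ a, ENNReal.ofReal |f a - g a| ∂ρ = (ρ.prod volume) S := by
    rw [Measure.prod_apply hSm]
    apply lintegral_congr
    intro a
    rw [abs_eq_vol (f a) (g a)]
    congr 1
  have h2 : (ρ.prod volume) S =
      ∫⁻ x, ρ {a | (x < f a ∧ g a ≤ x) ∨ (x < g a ∧ f a ≤ x)} := by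
    rw [Measure.prod_apply_symm hSm]
    rfl
  rw [h1, h2]

end Vallender

namespace Vallender

lemma lower (μ ν : Measure ℝ) [IsProbabilityMeasure μ] [IsProbabilityMeasure ν]
    (γ : Measure (ℝ × ℝ)) [IsProbabilityMeasure γ]
    (h1 : γ.map Prod.fst = μ) (h2 : γ.map Prod.snd = ν) :
    ∫⁻ x, ENNReal.ofReal |Fc μ x - Fc ν x| ≤
      ∫⁻ p : ℝ × ℝ, ENNReal.ofReal |p.1 - p.2| ∂γ := by
  rw [cost_eq γ measurable_fst measurable_snd]
  apply lintegral_mono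
  intro x
  have hAc : γ {p : ℝ × ℝ | p.1 ≤ x} = μ (Set.Iic x) := by
    rw [← h1, Measure.map_apply measurable_fst measurableSet_Iic]; rfl
  have hBc : γ {p : ℝ × ℝ | p.2 ≤ x} = ν (Set.Iic x) := by
    rw [← h2, Measure.map_apply measurable_snd measurableSet_Iic]; rfl
  set D := {a : ℝ × ℝ | (x < a.1 ∧ a.2 ≤ x) ∨ (x < a.2 ∧ a.1 ≤ x)} with hD
  have d1 : {p : ℝ × ℝ | p.2 ≤ x} \ {p : ℝ × ℝ | p.1 ≤ x} ⊆ D := by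
    rintro p ⟨hp2, hp1⟩
    exact Or.inl ⟨lt_of_not_ge hp1, hp2⟩
  have d2 : {p : ℝ × ℝ | p.1 ≤ x} \ {p : ℝ × ℝ | p.2 ≤ x} ⊆ D := by
    rintro p ⟨hp1, hp2⟩
    exact Or.inr ⟨lt_of_not_ge hp2, hp1⟩
  have g1 : ν (Set.Iic x) - μ (Set.Iic x) ≤ γ D := by
    calc ν (Set.Iic x) - μ (Set.Iic x)
        = γ {p : ℝ × ℝ | p.2 ≤ x} - γ {p : ℝ × ℝ | p.1 ≤ x} := by rw [hAc, hBc]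
      _ ≤ γ ({p : ℝ × ℝ | p.2 ≤ x} \ {p : ℝ × ℝ | p.1 ≤ x}) := le_measure_diff
      _ ≤ γ D := measure_mono d1
  have g2 : μ (Set.Iic x) - ν (Set.Iic x) ≤ γ D := by
    calc μ (Set.Iic x) - ν (Set.Iic x)
        = γ {p : ℝ × ℝ | p.1 ≤ x} - γ {p : ℝ × ℝ | p.2 ≤ x} := by rw [hAc, hBc]
      _ ≤ γ ({p : ℝ × ℝ | p.1 ≤ x} \ {p : ℝ × ℝ | p.2 ≤ x}) := le_measure_diff
      _ ≤ γ D := measure_mono d2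
  show ENNReal.ofReal |Fc μ x - Fc ν x| ≤ γ D
  rcases le_total (Fc μ x) (Fc ν x) with h | h
  · rw [abs_of_nonpos (by linarith), neg_sub,
      ENNReal.ofReal_sub _ (Fc_nonneg μ x), ofReal_Fc, ofReal_Fc]
    exact g1
  · rw [abs_of_nonneg (by linarith),
      ENNReal.ofReal_sub _ (Fc_nonneg ν x), ofReal_Fc, ofReal_Fc]
    exact g2

lemma vol_between (a b : ℝ) (ha0 : 0 ≤ a) (hb0 : 0 ≤ b) (ha1 : a ≤ 1) (hb1 : b ≤ 1) :
    volume ({t : ℝ | (a < t ∧ t ≤ b) ∨ (b < t ∧ t ≤ a)} ∩ Set.Ioo (0:ℝ) 1) =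
      ENNReal.ofReal |a - b| := by
  have key : ∀ a b : ℝ, a ≤ b → 0 ≤ a → b ≤ 1 →
      volume ({t : ℝ | (a < t ∧ t ≤ b) ∨ (b < t ∧ t ≤ a)} ∩ Set.Ioo (0:ℝ) 1) =
        ENNReal.ofReal (b - a) := by
    intro a b hab ha0 hb1
    have hset : {t : ℝ | (a < t ∧ t ≤ b) ∨ (b < t ∧ t ≤ a)} = Set.Ioc a b := by
      ext t
      simp only [mem_setOf_eq, mem_Ioc]
      constructor
      · rintro (⟨h1', h2'⟩ | ⟨h1', h2'⟩)
        · exact ⟨h1', h2'⟩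
        · constructor <;> linarith
      · rintro ⟨h1', h2'⟩
        exact Or.inl ⟨h1', h2'⟩
    rw [hset]
    apply le_antisymm
    · calc volume (Set.Ioc a b ∩ Set.Ioo (0:ℝ) 1) ≤ volume (Set.Ioc a b) :=
            measure_mono inter_subset_left
        _ = ENNReal.ofReal (b - a) := Real.volume_Ioc
    · calc ENNReal.ofReal (b - a) = volume (Set.Ioo a b) := Real.volume_Ioo.symm
        _ ≤ volume (Set.Ioc a b ∩ Set.Ioo (0:ℝ) 1) := by
            apply measure_mono
            rintro t ⟨ht1, ht2⟩
            exact ⟨⟨ht1, ht2.le⟩, lt_of_le_of_lt ha0 ht1, lt_of_lt_of_le ht2 hb1⟩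
  rcases le_total a b with h | h
  · rw [key a b h ha0 hb1, abs_sub_comm, abs_of_nonneg (by linarith)]
  · have hcomm : {t : ℝ | (a < t ∧ t ≤ b) ∨ (b < t ∧ t ≤ a)} =
        {t : ℝ | (b < t ∧ t ≤ a) ∨ (a < t ∧ t ≤ b)} := by ext t; exact or_comm
    rw [hcomm, key b a h hb0 ha1, abs_of_nonneg (by linarith)]

lemma cost_Q_eq (μ ν : Measure ℝ) [IsProbabilityMeasure μ] [IsProbabilityMeasure ν] :
    ∫⁻ t, ENNReal.ofReal |Q μ t - Q ν t| ∂(volume.restrict (Set.Ioo (0:ℝ) 1)) =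
    ∫⁻ x, ENNReal.ofReal |Fc μ x - Fc ν x| := by
  rw [cost_eq _ (measurable_Q μ) (measurable_Q ν)]
  apply lintegral_congr
  intro x
  have hmeas : MeasurableSet {t : ℝ | (x < Q μ t ∧ Q ν t ≤ x) ∨ (x < Q ν t ∧ Q μ t ≤ x)} := by
    apply MeasurableSet.union
    · exact (measurableSet_lt measurable_const (measurable_Q μ)).inter
        (measurableSet_le (measurable_Q ν) measurable_const)
    · exact (measurableSet_lt measurable_const (measurable_Q ν)).inter
        (measurableSet_le (measurable_Q μ) measurable_const)
  rw [Measure.restrict_apply hmeas]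
  have hset : {t : ℝ | (x < Q μ t ∧ Q ν t ≤ x) ∨ (x < Q ν t ∧ Q μ t ≤ x)} ∩ Set.Ioo (0:ℝ) 1 =
      {t : ℝ | (Fc μ x < t ∧ t ≤ Fc ν x) ∨ (Fc ν x < t ∧ t ≤ Fc μ x)} ∩ Set.Ioo (0:ℝ) 1 := by
    ext t
    simp only [mem_inter_iff, mem_setOf_eq, and_congr_left_iff]
    intro ht
    have e1 : x < Q μ t ↔ Fc μ x < t := by
      rw [← not_le, ← not_le, Q_le_iff μ ht]
    have e2 : Q μ t ≤ x ↔ t ≤ Fc μ x := Q_le_iff μ ht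
    have e3 : x < Q ν t ↔ Fc ν x < t := by
      rw [← not_le, ← not_le, Q_le_iff ν ht]
    have e4 : Q ν t ≤ x ↔ t ≤ Fc ν x := Q_le_iff ν ht
    rw [e1, e2, e3, e4]
  rw [hset, vol_between _ _ (Fc_nonneg μ x) (Fc_nonneg ν x) (Fc_le_one μ x) (Fc_le_one ν x)]

lemma integrable_cost (μ ν : Measure ℝ) [IsProbabilityMeasure μ] [IsProbabilityMeasure ν]
    (hμ : Integrable (fun x : ℝ => |x|) μ) (hν : Integrable (fun x : ℝ => |x|) ν)
    (γ : Measure (ℝ × ℝ)) [IsProbabilityMeasure γ]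
    (h1 : γ.map Prod.fst = μ) (h2 : γ.map Prod.snd = ν) :
    Integrable (fun p : ℝ × ℝ => |p.1 - p.2|) γ := by
  have i1 : Integrable (fun p : ℝ × ℝ => |p.1|) γ := by
    have h : Integrable (fun x : ℝ => |x|) (γ.map Prod.fst) := h1.symm ▸ hμ
    exact (integrable_map_measure continuous_abs.measurable.aestronglyMeasurable
      measurable_fst.aemeasurable).mp h
  have i2 : Integrable (fun p : ℝ × ℝ => |p.2|) γ := by
    have h : Integrable (fun x : ℝ => |x|) (γ.map Prod.snd) := h2.symm ▸ hν
    exact (integrable_map_measure continuous_abs.measurable.aestronglyMeasurable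
      measurable_snd.aemeasurable).mp h
  apply Integrable.mono' (i1.add i2)
  · exact ((measurable_fst.sub measurable_snd).abs).aestronglyMeasurable
  · filter_upwards with p
    rw [Real.norm_eq_abs, abs_abs]
    calc |p.1 - p.2| ≤ |p.1| + |p.2| := by
          rw [sub_eq_add_neg]
          exact (abs_add_le _ _).trans (by rw [abs_neg])
      _ = _ := rfl

lemma lint_ne_top (γ : Measure (ℝ × ℝ))
    (h : Integrable (fun p : ℝ × ℝ => |p.1 - p.2|) γ) :
    ∫⁻ p : ℝ × ℝ, ENNReal.ofReal |p.1 - p.2| ∂γ ≠ ⊤ := by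
  have h2 := h.2
  rw [HasFiniteIntegral] at h2
  refine ne_of_lt (lt_of_le_of_lt (le_of_eq (lintegral_congr fun p => ?_)) h2)
  rw [← Real.enorm_eq_ofReal (abs_nonneg _)]

lemma int_cost_eq (γ : Measure (ℝ × ℝ)) :
    ∫ p : ℝ × ℝ, |p.1 - p.2| ∂γ =
      (∫⁻ p : ℝ × ℝ, ENNReal.ofReal |p.1 - p.2| ∂γ).toReal := by
  apply integral_eq_lintegral_of_nonneg_ae (ae_of_all _ fun _ => abs_nonneg _)
  exact (measurable_fst.sub measurable_snd).abs.aestronglyMeasurable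

end Vallender

open Vallender

/-- **Closed form of the Wasserstein-1 distance on ℝ (Vallender, 1974).**
For Borel probability measures `μ ν` on `ℝ` with finite first moments, the infimum over all
couplings `γ` of `μ` and `ν` of the transport cost `∫ |u - v| dγ(u, v)` equals the integral
of the absolute difference of the cumulative distribution functions,
`∫ |F_μ x - F_ν x| dx` where `F_μ x = μ (Iic x)`. -/
theorem wasserstein1_eq_integral_abs_cdf_sub
    (μ ν : Measure ℝ) [IsProbabilityMeasure μ] [IsProbabilityMeasure ν]
    (hμ : Integrable (fun x : ℝ => |x|) μ) (hν : Integrable (fun x : ℝ => |x|) ν) :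
    (⨅ γ : {γ : Measure (ℝ × ℝ) // IsProbabilityMeasure γ ∧
        γ.map Prod.fst = μ ∧ γ.map Prod.snd = ν},
      ∫ p : ℝ × ℝ, |p.1 - p.2| ∂(γ : Measure (ℝ × ℝ))) =
    ∫ x : ℝ, |(μ (Set.Iic x)).toReal - (ν (Set.Iic x)).toReal| := by
  classical
  set LR := ∫⁻ x, ENNReal.ofReal |Fc μ x - Fc ν x| with hLRdef
  -- the right-hand side as a toReal of a lintegral
  have hRrepr : (∫ x : ℝ, |(μ (Set.Iic x)).toReal - (ν (Set.Iic x)).toReal|) = LR.toReal := by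
    rw [hLRdef]
    apply integral_eq_lintegral_of_nonneg_ae (ae_of_all _ fun _ => abs_nonneg _)
    exact ((measurable_Fc μ).sub (measurable_Fc ν)).abs.aestronglyMeasurable
  -- the quantile coupling
  set ρ := volume.restrict (Set.Ioo (0:ℝ) 1) with hρdef
  set γ0 := Measure.map (fun t => (Q μ t, Q ν t)) ρ with hγ0def
  have hmeas0 : Measurable fun t : ℝ => (Q μ t, Q ν t) :=
    (measurable_Q μ).prodMk (measurable_Q ν)
  haveI hγ0p : IsProbabilityMeasure γ0 := Measure.isProbabilityMeasure_map hmeas0.aemeasurable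
  have hfst : γ0.map Prod.fst = μ := by
    rw [hγ0def, Measure.map_map measurable_fst hmeas0]
    exact map_Q μ
  have hsnd : γ0.map Prod.snd = ν := by
    rw [hγ0def, Measure.map_map measurable_snd hmeas0]
    exact map_Q ν
  have hcost0 : ∫⁻ p : ℝ × ℝ, ENNReal.ofReal |p.1 - p.2| ∂γ0 = LR := by
    rw [hγ0def, lintegral_map (show Measurable fun p : ℝ × ℝ => ENNReal.ofReal |p.1 - p.2| from (measurable_fst.sub measurable_snd).abs.ennreal_ofReal) hmeas0]
    exact cost_Q_eq μ ν
  have hLRtop : LR ≠ ⊤ := by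
    rw [← hcost0]
    exact lint_ne_top γ0 (integrable_cost μ ν hμ hν γ0 hfst hsnd)
  -- lower bound for every coupling
  have hlow : ∀ γ : {γ : Measure (ℝ × ℝ) // IsProbabilityMeasure γ ∧
      γ.map Prod.fst = μ ∧ γ.map Prod.snd = ν},
      LR.toReal ≤ ∫ p : ℝ × ℝ, |p.1 - p.2| ∂(γ : Measure (ℝ × ℝ)) := by
    rintro ⟨γ, hp, h1, h2⟩
    haveI := hp
    rw [int_cost_eq γ]
    exact ENNReal.toReal_mono (lint_ne_top γ (integrable_cost μ ν hμ hν γ h1 h2))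
      (lower μ ν γ h1 h2)
  haveI : Nonempty {γ : Measure (ℝ × ℝ) // IsProbabilityMeasure γ ∧
      γ.map Prod.fst = μ ∧ γ.map Prod.snd = ν} := ⟨⟨γ0, hγ0p, hfst, hsnd⟩⟩
  rw [hRrepr]
  apply le_antisymm
  · have hle := ciInf_le (f := fun γ : {γ : Measure (ℝ × ℝ) // IsProbabilityMeasure γ ∧
        γ.map Prod.fst = μ ∧ γ.map Prod.snd = ν} =>
        ∫ p : ℝ × ℝ, |p.1 - p.2| ∂(γ : Measure (ℝ × ℝ)))
      ⟨LR.toReal, by rintro r ⟨γ, rfl⟩; exact hlow γ⟩ ⟨γ0, hγ0p, hfst, hsnd⟩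
    refine le_trans hle ?_
    rw [int_cost_eq γ0, hcost0]
  · exact le_ciInf hlow
end
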